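/- Every instance of the relaxed unsplittable stable allocation problem admits a job-optimal relaxed unsplit stable assignment, i.e., a relaxed unsplit stable assignment x_jopt such that every job weakly prefers its assigned machine in x_jopt to its assigned machine in every relaxed unsplit stable assignment. -/
import Mathlib


open Finset

/-- An instance of the (relaxed) unsplittable stable allocation problem:
a finite bipartite graph between jobs `J` and machines `M` given by the
adjacency relation `adj`, sizes `qJ` and capacities `qM`, strict preferences
encoded by injective rank functions (smaller rank = more preferred), and a
dummy machine `md` adjacent to every job, ranked last by every job, whose
capacity exceeds the total size of all jobs. -/
structure Inst (J M : Type) [Fintype J] [DecidableEq J] [Fintype M] [DecidableEq M] where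
  adj : J → M → Prop
  qJ : J → ℝ
  qM : M → ℝ
  qJ_pos : ∀ j, 0 < qJ j
  qM_pos : ∀ m, 0 < qM m
  rankJ : J → M → ℕ
  rankM : M → J → ℕ
  rankJ_inj : ∀ j m m', adj j m → adj j m' → rankJ j m = rankJ j m' → m = m'
  rankM_inj : ∀ m j j', adj j m → adj j' m → rankM m j = rankM m j' → j = j'
  md : M
  md_adj : ∀ j, adj j md
  md_last : ∀ j m, adj j m → m ≠ md → rankJ j m < rankJ j md
  md_cap : (∑ j : J, qJ j) < qM md

variable {J M : Type} [Fintype J] [DecidableEq J] [Fintype M] [DecidableEq M]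

/-- `x(m)`: the total size assigned to machine `m` by the unsplit assignment
`a : J → M` (each job is assigned in its entirety to exactly one machine). -/
def load (I : Inst J M) (a : J → M) (m : M) : ℝ :=
  ∑ j ∈ Finset.univ.filter (fun j => a j = m), I.qJ j

/-- `a` is a valid unsplit assignment: every job is assigned along an edge. -/
def IsUnsplit (I : Inst J M) (a : J → M) : Prop :=
  ∀ j, I.adj j (a j)

/-- The relaxed capacity condition: for every machine `m` with at least one
assigned job, removing the least preferred job `j` assigned to `m` (largest
rank among assigned jobs) leaves `m` strictly below its capacity. -/
def IsRelaxed (I : Inst J M) (a : J → M) : Prop :=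
  ∀ m j, a j = m → (∀ j', a j' = m → I.rankM m j' ≤ I.rankM m j) →
    load I a m - I.qJ j < I.qM m

/-- Edge `jm` (with `a j ≠ m`) blocks `a`: `j` prefers `m` to its assigned
machine, and the total size of jobs assigned to `m` that `m` prefers to `j`
is below `m`'s capacity. -/
def Blocks (I : Inst J M) (a : J → M) (j : J) (m : M) : Prop :=
  I.adj j m ∧ a j ≠ m ∧ I.rankJ j m < I.rankJ j (a j) ∧
  (∑ j' ∈ Finset.univ.filter (fun j' => a j' = m ∧ I.rankM m j' < I.rankM m j), I.qJ j')
    < I.qM m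

/-- A relaxed unsplit stable assignment. -/
def IsStable (I : Inst J M) (a : J → M) : Prop :=
  IsUnsplit I a ∧ IsRelaxed I a ∧ ∀ j m, ¬ Blocks I a j m

/-- Machine `m` weakly prefers `a1` to `a2` (lexicographic order): either the
sets of jobs assigned to `m` coincide, or the best job (in `m`'s preference)
among the jobs assigned to `m` in exactly one of the two assignments is
assigned to `m` in `a1`. -/
def MPrefers (I : Inst J M) (m : M) (a1 a2 : J → M) : Prop :=
  (∀ j, a1 j = m ↔ a2 j = m) ∨
  ∃ j, a1 j = m ∧ a2 j ≠ m ∧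
    ∀ j', ((a1 j' = m ∧ a2 j' ≠ m) ∨ (a2 j' = m ∧ a1 j' ≠ m)) →
      I.rankM m j ≤ I.rankM m j'

/-- Job `j` weakly prefers its machine in `a1` to its machine in `a2`. -/
def JPrefers (I : Inst J M) (j : J) (a1 a2 : J → M) : Prop :=
  I.rankJ j (a1 j) ≤ I.rankJ j (a2 j)

/-- A machine-optimal relaxed unsplit stable assignment. -/
def MOptimal (I : Inst J M) (a : J → M) : Prop :=
  IsStable I a ∧ ∀ a', IsStable I a' → ∀ m, MPrefers I m a a'

/-- A job-optimal relaxed unsplit stable assignment. -/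
def JOptimal (I : Inst J M) (a : J → M) : Prop :=
  IsStable I a ∧ ∀ a', IsStable I a' → ∀ j, JPrefers I j a a'

/-- The size `|x|` of an unsplit assignment: total size of the jobs assigned
to a real (non-dummy) machine. -/
def totalSize (I : Inst J M) (a : J → M) : ℝ :=
  ∑ j ∈ Finset.univ.filter (fun j => a j ≠ I.md), I.qJ j

section Algorithm

open scoped Classical

variable (I : Inst J M)

/-- Candidate machines for job `j` given rejected set `R`. -/
noncomputable def Cand (R : Finset (J × M)) (j : J) : Finset M :=
  Finset.univ.filter (fun m => I.adj j m ∧ (j, m) ∉ R)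

/-- Tentative assignment: best (min rank) candidate machine. -/
noncomputable def assign (R : Finset (J × M)) (j : J) : M :=
  if h : (Cand I R j).Nonempty then
    (Finset.exists_min_image (Cand I R j) (I.rankJ j) h).choose
  else I.md

/-- No job has been rejected by the dummy machine. -/
def Good (R : Finset (J × M)) : Prop := ∀ j, (j, I.md) ∉ R

variable {I}

lemma Cand_nonempty {R : Finset (J × M)} (hg : Good I R) (j : J) :
    (Cand I R j).Nonempty :=
  ⟨I.md, by simp [Cand, I.md_adj j, hg j]⟩

lemma assign_spec {R : Finset (J × M)} {j : J} (h : (Cand I R j).Nonempty) :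
    assign I R j ∈ Cand I R j ∧
      ∀ m ∈ Cand I R j, I.rankJ j (assign I R j) ≤ I.rankJ j m := by
  rw [assign, dif_pos h]
  exact ⟨(Finset.exists_min_image (Cand I R j) (I.rankJ j) h).choose_spec.1,
    (Finset.exists_min_image (Cand I R j) (I.rankJ j) h).choose_spec.2⟩

lemma assign_adj {R : Finset (J × M)} (hg : Good I R) (j : J) :
    I.adj j (assign I R j) := by
  have := (assign_spec (Cand_nonempty hg j)).1
  simp only [Cand, Finset.mem_filter] at this
  exact this.2.1

lemma assign_notMem {R : Finset (J × M)} (hg : Good I R) (j : J) :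
    (j, assign I R j) ∉ R := by
  have := (assign_spec (Cand_nonempty hg j)).1
  simp only [Cand, Finset.mem_filter] at this
  exact this.2.2

lemma assign_min {R : Finset (J × M)} (hg : Good I R) {j : J} {m : M}
    (ha : I.adj j m) (hr : (j, m) ∉ R) :
    I.rankJ j (assign I R j) ≤ I.rankJ j m :=
  (assign_spec (Cand_nonempty hg j)).2 m (by simp [Cand, ha, hr])

/-- The rejection step is enabled at job `j`. -/
def Bad (I : Inst J M) (R : Finset (J × M)) (j : J) : Prop :=
  (∀ j', assign I R j' = assign I R j →
      I.rankM (assign I R j) j' ≤ I.rankM (assign I R j) j) ∧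
  I.qM (assign I R j) ≤ load I (assign I R) (assign I R j) - I.qJ j

lemma load_le_total (a : J → M) (m : M) : load I a m ≤ ∑ j, I.qJ j :=
  Finset.sum_le_sum_of_subset_of_nonneg (Finset.filter_subset _ _)
    (fun j _ _ => (I.qJ_pos j).le)

lemma bad_ne_md {R : Finset (J × M)} {j0 : J} (hb : Bad I R j0) :
    assign I R j0 ≠ I.md := by
  intro h
  have h1 := hb.2
  rw [h] at h1
  have h2 := load_le_total (I := I) (assign I R) I.md
  have h3 := I.md_cap
  have h4 := I.qJ_pos j0
  linarith

lemma good_insert {R : Finset (J × M)} {j0 : J} (hg : Good I R) (hb : Bad I R j0) :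
    Good I (insert (j0, assign I R j0) R) := by
  intro j hmem
  rcases Finset.mem_insert.1 hmem with h | h
  · have h' := Prod.ext_iff.1 h
    exact bad_ne_md hb h'.2.symm
  · exact hg j h

lemma Cand_insert_ne {R : Finset (J × M)} {j j0 : J} {m0 : M} (hj : j ≠ j0) :
    Cand I (insert (j0, m0) R) j = Cand I R j := by
  ext m
  simp [Cand, Prod.ext_iff, hj]

lemma adj_of_mem_Cand {R : Finset (J × M)} {j : J} {m : M} (h : m ∈ Cand I R j) :
    I.adj j m := by
  simp only [Cand, Finset.mem_filter] at h
  exact h.2.1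

lemma assign_congr {R R' : Finset (J × M)} {j : J}
    (h : Cand I R j = Cand I R' j) : assign I R j = assign I R' j := by
  by_cases hne : (Cand I R j).Nonempty
  · have hne' : (Cand I R' j).Nonempty := h ▸ hne
    obtain ⟨h1, h2⟩ := assign_spec hne
    obtain ⟨h1', h2'⟩ := assign_spec hne'
    refine I.rankJ_inj j _ _ (adj_of_mem_Cand h1) (adj_of_mem_Cand h1')
      (le_antisymm (h2 _ (h ▸ h1')) (h2' _ (h ▸ h1)))
  · have hne' : ¬ (Cand I R' j).Nonempty := by rw [← h]; exact hne
    rw [assign, assign, dif_neg hne, dif_neg hne']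

lemma assign_insert_ne {R : Finset (J × M)} {j j0 : J} {m0 : M} (hj : j ≠ j0) :
    assign I (insert (j0, m0) R) j = assign I R j :=
  assign_congr (Cand_insert_ne hj)

/-- The main invariant of the deferred-acceptance procedure. -/
def GSInv (I : Inst J M) (R : Finset (J × M)) : Prop :=
  Good I R ∧
  (∀ j m, (j, m) ∈ R →
    I.qM m ≤ ∑ j' ∈ Finset.univ.filter
      (fun j' => assign I R j' = m ∧ I.rankM m j' < I.rankM m j), I.qJ j') ∧
  (∀ a', IsStable I a' → ∀ j, (j, a' j) ∉ R)

lemma step_inv {R : Finset (J × M)} {j0 : J}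
    (hInv : GSInv I R) (hbad : Bad I R j0) :
    GSInv I (insert (j0, assign I R j0) R) := by
  obtain ⟨hg, hsum, hstab⟩ := hInv
  set m0 := assign I R j0 with hm0
  set R' := insert (j0, m0) R with hR'
  have hg' : Good I R' := good_insert hg hbad
  have hne : ∀ j : J, j ≠ j0 → assign I R' j = assign I R j :=
    fun j hj => assign_insert_ne hj
  have hj0adj : I.adj j0 m0 := assign_adj hg j0
  have hj0' : assign I R' j0 ≠ m0 := by
    intro h
    have h2 := assign_notMem hg' j0
    rw [h] at h2
    exact h2 (Finset.mem_insert_self _ _)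
  have hworst : ∀ j', assign I R j' = m0 → j' ≠ j0 →
      I.rankM m0 j' < I.rankM m0 j0 := by
    intro j' h1 h2
    have hle := hbad.1 j' h1
    have hadj' : I.adj j' m0 := by rw [← h1]; exact assign_adj hg j'
    rcases lt_or_eq_of_le hle with h | h
    · exact h
    · exact absurd (I.rankM_inj m0 j' j0 hadj' hj0adj h) h2
  have hj0mem : j0 ∈ Finset.univ.filter (fun j' => assign I R j' = m0) :=
    Finset.mem_filter.2 ⟨Finset.mem_univ _, hm0.symm⟩
  have hload : load I (assign I R) m0 = ∑ j' ∈ Finset.univ.filter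
      (fun j' => assign I R j' = m0), I.qJ j' := rfl
  have hkey : I.qM m0 ≤ ∑ j' ∈ Finset.univ.filter
      (fun j' => assign I R' j' = m0 ∧ I.rankM m0 j' < I.rankM m0 j0), I.qJ j' := by
    have hset : Finset.univ.filter
        (fun j' => assign I R' j' = m0 ∧ I.rankM m0 j' < I.rankM m0 j0)
        = (Finset.univ.filter (fun j' => assign I R j' = m0)).erase j0 := by
      ext j'
      simp only [Finset.mem_filter, Finset.mem_univ, true_and, Finset.mem_erase]
      constructor
      · rintro ⟨h1, h2⟩
        have hjj : j' ≠ j0 := by rintro rfl; exact hj0' h1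
        exact ⟨hjj, by rw [← hne j' hjj]; exact h1⟩
      · rintro ⟨hjj, h1⟩
        exact ⟨by rw [hne j' hjj]; exact h1, hworst j' h1 hjj⟩
    rw [hset, Finset.sum_erase_eq_sub hj0mem]
    have hb2 := hbad.2
    rw [← hm0, hload] at hb2
    exact hb2
  refine ⟨hg', ?_, ?_⟩
  · intro j m hjm
    rcases Finset.mem_insert.1 hjm with h | h
    · injection h with h1 h2
      subst h1; subst h2
      exact hkey
    · have hold := hsum j m h
      by_cases hmm : m = m0
      · subst hmm
        rcases le_or_gt (I.rankM m0 j) (I.rankM m0 j0) with hr | hr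
        · have hset : Finset.univ.filter
              (fun j' => assign I R' j' = m0 ∧ I.rankM m0 j' < I.rankM m0 j)
              = Finset.univ.filter
              (fun j' => assign I R j' = m0 ∧ I.rankM m0 j' < I.rankM m0 j) := by
            ext j'
            simp only [Finset.mem_filter, Finset.mem_univ, true_and]
            constructor
            · rintro ⟨h1, h2⟩
              have hjj : j' ≠ j0 := by rintro rfl; exact hj0' h1
              exact ⟨by rw [← hne j' hjj]; exact h1, h2⟩
            · rintro ⟨h1, h2⟩
              have hjj : j' ≠ j0 := by
                rintro rfl
                exact absurd h2 (not_lt.2 hr)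
              exact ⟨by rw [hne j' hjj]; exact h1, h2⟩
          rw [hset]
          exact hold
        · refine hkey.trans (Finset.sum_le_sum_of_subset_of_nonneg ?_
            (fun i _ _ => (I.qJ_pos i).le))
          intro j' hj'
          simp only [Finset.mem_filter, Finset.mem_univ, true_and] at hj' ⊢
          exact ⟨hj'.1, hj'.2.trans hr⟩
      · refine hold.trans (Finset.sum_le_sum_of_subset_of_nonneg ?_
          (fun i _ _ => (I.qJ_pos i).le))
        intro j' hj'
        simp only [Finset.mem_filter, Finset.mem_univ, true_and] at hj' ⊢
        have hjj : j' ≠ j0 := by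
          rintro rfl
          exact hmm (hj'.1 ▸ hm0.symm ▸ rfl) 
        exact ⟨by rw [hne j' hjj]; exact hj'.1, hj'.2⟩
  · intro a' hst j hjm
    rcases Finset.mem_insert.1 hjm with h | h
    swap
    · exact hstab a' hst j h
    injection h with h1 hm2
    have hm : a' j0 = m0 := h1 ▸ hm2
    set A := Finset.univ.filter (fun j' => a' j' = m0) with hA
    have hj0A : j0 ∈ A := Finset.mem_filter.2 ⟨Finset.mem_univ _, hm⟩
    obtain ⟨w, hwA, hwmax⟩ := Finset.exists_max_image A (I.rankM m0) ⟨j0, hj0A⟩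
    have hwa : a' w = m0 := (Finset.mem_filter.1 hwA).2
    have hrel : load I a' m0 - I.qJ w < I.qM m0 :=
      hst.2.1 m0 w hwa (fun j' hj' => hwmax j'
        (Finset.mem_filter.2 ⟨Finset.mem_univ _, hj'⟩))
    have hloadw : load I a' m0 - I.qJ w = ∑ j' ∈ A.erase w, I.qJ j' :=
      (Finset.sum_erase_eq_sub hwA).symm
    have hS : I.qM m0 ≤ ∑ j' ∈
        (Finset.univ.filter (fun j' => assign I R j' = m0)).erase j0, I.qJ j' := by
      rw [Finset.sum_erase_eq_sub hj0mem]
      have hb2 := hbad.2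
      rw [← hm0, hload] at hb2
      exact hb2
    have hwj0 : I.rankM m0 j0 ≤ I.rankM m0 w := hwmax j0 hj0A
    by_cases hall : ∀ j' ∈ (Finset.univ.filter
        (fun j' => assign I R j' = m0)).erase j0, a' j' = m0
    · by_cases hw : w = j0
      · have hsub : (Finset.univ.filter (fun j' => assign I R j' = m0)).erase j0
            ⊆ A.erase w := by
          intro j' hj'
          have h2 := Finset.mem_erase.1 hj'
          exact Finset.mem_erase.2 ⟨hw ▸ h2.1,
            Finset.mem_filter.2 ⟨Finset.mem_univ _, hall j' hj'⟩⟩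
        have hle := Finset.sum_le_sum_of_subset_of_nonneg hsub
          (fun i _ _ => (I.qJ_pos i).le)
        rw [← hloadw] at hle
        linarith
      · have hj0notS : j0 ∉ (Finset.univ.filter
            (fun j' => assign I R j' = m0)).erase j0 := Finset.notMem_erase _ _
        have hsub : insert j0 ((Finset.univ.filter
            (fun j' => assign I R j' = m0)).erase j0) ⊆ A.erase w := by
          intro j' hj'
          rcases Finset.mem_insert.1 hj' with rfl | hj'
          · exact Finset.mem_erase.2 ⟨fun h1 => hw h1.symm, hj0A⟩
          · obtain ⟨hne', hmem'⟩ := Finset.mem_erase.1 hj'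
            have h1 : assign I R j' = m0 := (Finset.mem_filter.1 hmem').2
            have hlt : I.rankM m0 j' < I.rankM m0 j0 := hworst j' h1 hne'
            refine Finset.mem_erase.2 ⟨?_,
              Finset.mem_filter.2 ⟨Finset.mem_univ _, hall j'
                (Finset.mem_erase.2 ⟨hne', hmem'⟩)⟩⟩
            rintro rfl
            omega
        have hsum2 := Finset.sum_le_sum_of_subset_of_nonneg hsub
          (fun i _ _ => (I.qJ_pos i).le)
        rw [Finset.sum_insert hj0notS, ← hloadw] at hsum2
        have hq := I.qJ_pos j0
        linarith
    · push_neg at hall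
      obtain ⟨j', hj'S, hj'ne⟩ := hall
      obtain ⟨hj'j0, hj'mem⟩ := Finset.mem_erase.1 hj'S
      have h1 : assign I R j' = m0 := (Finset.mem_filter.1 hj'mem).2
      have hadjj' : I.adj j' m0 := by rw [← h1]; exact assign_adj hg j'
      have hpref : I.rankJ j' m0 < I.rankJ j' (a' j') := by
        have hle : I.rankJ j' (assign I R j') ≤ I.rankJ j' (a' j') :=
          assign_min hg (hst.1 j') (hstab a' hst j')
        rw [h1] at hle
        rcases lt_or_eq_of_le hle with h2 | h2
        · exact h2
        · exact absurd (I.rankJ_inj j' m0 (a' j') hadjj' (hst.1 j') h2).symm hj'ne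
      have hrank' : I.rankM m0 j' < I.rankM m0 j0 := hworst j' h1 hj'j0
      have hblocksum : (∑ j'' ∈ Finset.univ.filter
          (fun j'' => a' j'' = m0 ∧ I.rankM m0 j'' < I.rankM m0 j'), I.qJ j'')
          < I.qM m0 := by
        have hsub : Finset.univ.filter
            (fun j'' => a' j'' = m0 ∧ I.rankM m0 j'' < I.rankM m0 j')
            ⊆ A.erase w := by
          intro j'' hj''
          have h2 := (Finset.mem_filter.1 hj'').2
          refine Finset.mem_erase.2 ⟨?_,
            Finset.mem_filter.2 ⟨Finset.mem_univ _, h2.1⟩⟩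
          rintro rfl
          have := h2.2
          omega
        calc (∑ j'' ∈ Finset.univ.filter
            (fun j'' => a' j'' = m0 ∧ I.rankM m0 j'' < I.rankM m0 j'), I.qJ j'')
            ≤ ∑ j'' ∈ A.erase w, I.qJ j'' :=
              Finset.sum_le_sum_of_subset_of_nonneg hsub
                (fun i _ _ => (I.qJ_pos i).le)
          _ = load I a' m0 - I.qJ w := hloadw.symm
          _ < I.qM m0 := hrel
      exact hst.2.2 j' m0 ⟨hadjj', hj'ne, hpref, hblocksum⟩

variable (I)

/-- Run the deferred-acceptance rejection procedure to completion. -/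
noncomputable def run (R : Finset (J × M)) : Finset (J × M) :=
  if h : ∃ p : J × M, p ∉ R ∧ p.2 = assign I R p.1 ∧ Bad I R p.1 then
    run (insert h.choose R)
  else R
termination_by Fintype.card (J × M) - R.card
decreasing_by
  have h1 : h.choose ∉ R := h.choose_spec.1
  have h2 : R.card < (insert h.choose R).card := by
    rw [Finset.card_insert_of_notMem h1]; omega
  have h3 : (insert h.choose R).card ≤ Fintype.card (J × M) := by
    simpa using Finset.card_le_univ (insert h.choose R)
  omega

variable {I}

lemma run_inv (R : Finset (J × M)) (h : GSInv I R) :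
    GSInv I (run I R) ∧
      ¬ ∃ p : J × M, p ∉ run I R ∧ p.2 = assign I (run I R) p.1 ∧
        Bad I (run I R) p.1 := by
  rw [run]
  split_ifs with hc
  · have hspec := hc.choose_spec
    have hstep : GSInv I (insert hc.choose R) := by
      have := step_inv h hspec.2.2
      rwa [← hspec.2.1, Prod.mk.eta] at this
    exact run_inv (insert hc.choose R) hstep
  · exact ⟨h, hc⟩
termination_by Fintype.card (J × M) - R.card
decreasing_by
  have h1 : hc.choose ∉ R := hc.choose_spec.1
  have h2 : R.card < (insert hc.choose R).card := by
    rw [Finset.card_insert_of_notMem h1]; omega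
  have h3 : (insert hc.choose R).card ≤ Fintype.card (J × M) := by
    simpa using Finset.card_le_univ (insert hc.choose R)
  omega

end Algorithm

/-- every instance admits a job-optimal relaxed unsplit stable
assignment. -/
theorem exists_job_optimal (I : Inst J M) :
    ∃ a : J → M, JOptimal I a := by
  have hinv0 : GSInv I (∅ : Finset (J × M)) :=
    ⟨fun j h => absurd h (Finset.notMem_empty _),
     fun j m h => absurd h (Finset.notMem_empty _),
     fun a' _ j h => absurd h (Finset.notMem_empty _)⟩
  obtain ⟨⟨hg, hsum, hstab⟩, hstop⟩ := run_inv (∅ : Finset (J × M)) hinv0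
  set Rf := run I (∅ : Finset (J × M)) with hRf
  refine ⟨assign I Rf, ⟨⟨fun j => assign_adj hg j, ?_, ?_⟩, ?_⟩⟩
  · intro m j hj hw
    by_contra hge
    push_neg at hge
    apply hstop
    subst hj
    exact ⟨(j, assign I Rf j), assign_notMem hg j, rfl, hw, hge⟩
  · intro j m hb
    obtain ⟨hadj, hne, hpref, hsum'⟩ := hb
    have hmem : (j, m) ∈ Rf := by
      by_contra hnm
      exact absurd (assign_min hg hadj hnm) (not_le.2 hpref)
    exact absurd (hsum j m hmem) (not_le.2 hsum')
  · intro a' hst j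
    exact assign_min hg (hst.1 j) (hstab a' hst j)
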